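/- Let E and E' be normed spaces with E' a Banach space, and let φ : E × E → ℝ≥0 satisfy Σ_{i=0}^∞ 2^{−i} φ(2^i a, 2^i b) < ∞ for all a, b. If f : E → E' satisfies ‖f(a+b) − f(a) − f(b)‖ ≤ φ(a,b) for all a, b ∈ E, then for each a ∈ E and each n ∈ ℕ one has ‖2^{−n} f(2^n a) − f(a)‖ ≤ (1/2) Σ_{i=0}^{n−1} 2^{−i} φ(2^i a, 2^i a). -/

import Mathlib

set_option linter.unusedVariables false

theorem stmt {E E' : Type*} [NormedAddCommGroup E] [NormedSpace ℝ E]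
    [NormedAddCommGroup E'] [NormedSpace ℝ E'] [CompleteSpace E']
    (φ : E → E → ℝ) (hφ0 : ∀ a b : E, 0 ≤ φ a b)
    (hsum : ∀ a b : E, Summable fun i : ℕ =>
      ((2 : ℝ) ^ i)⁻¹ * φ ((2 : ℝ) ^ i • a) ((2 : ℝ) ^ i • b))
    (f : E → E') (hf : ∀ a b : E, ‖f (a + b) - f a - f b‖ ≤ φ a b) :
    ∀ (a : E) (n : ℕ), ‖((2 : ℝ) ^ n)⁻¹ • f ((2 : ℝ) ^ n • a) - f a‖ ≤
      2⁻¹ * ∑ i ∈ Finset.range n, ((2 : ℝ) ^ i)⁻¹ * φ ((2 : ℝ) ^ i • a) ((2 : ℝ) ^ i • a) := by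
  intro a n
  induction n with
  | zero => simp
  | succ n ih =>
    set x := (2 : ℝ) ^ n • a with hxdef
    have hx := hf x x
    have h2 : (2 : ℝ) ^ (n + 1) • a = x + x := by
      rw [hxdef, ← add_smul]; ring_nf
    have key : ‖((2 : ℝ) ^ (n + 1))⁻¹ • f ((2 : ℝ) ^ (n + 1) • a) - ((2 : ℝ) ^ n)⁻¹ • f x‖
        ≤ ((2 : ℝ) ^ (n + 1))⁻¹ * φ x x := by
      have heq : ((2 : ℝ) ^ (n + 1))⁻¹ • f ((2 : ℝ) ^ (n + 1) • a) - ((2 : ℝ) ^ n)⁻¹ • f x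
          = ((2 : ℝ) ^ (n + 1))⁻¹ • (f (x + x) - f x - f x) := by
        rw [← h2]
        have h3 : ((2 : ℝ) ^ n)⁻¹ = ((2 : ℝ) ^ (n + 1))⁻¹ + ((2 : ℝ) ^ (n + 1))⁻¹ := by
          rw [pow_succ]; field_simp; ring
        rw [smul_sub, smul_sub, h3, add_smul]
        abel
      rw [heq, norm_smul, norm_inv, norm_pow, Real.norm_ofNat]
      exact mul_le_mul_of_nonneg_left hx (by positivity)
    have tri : ‖((2 : ℝ) ^ (n + 1))⁻¹ • f ((2 : ℝ) ^ (n + 1) • a) - f a‖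
        ≤ ‖((2 : ℝ) ^ (n + 1))⁻¹ • f ((2 : ℝ) ^ (n + 1) • a) - ((2 : ℝ) ^ n)⁻¹ • f x‖
          + ‖((2 : ℝ) ^ n)⁻¹ • f x - f a‖ := by
      have := norm_add_le (((2 : ℝ) ^ (n + 1))⁻¹ • f ((2 : ℝ) ^ (n + 1) • a) - ((2 : ℝ) ^ n)⁻¹ • f x)
        (((2 : ℝ) ^ n)⁻¹ • f x - f a)
      simpa using this
    rw [Finset.sum_range_succ]
    have h4 : ((2 : ℝ) ^ (n + 1))⁻¹ = 2⁻¹ * ((2 : ℝ) ^ n)⁻¹ := by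
      rw [pow_succ]; field_simp
    rw [← hxdef]
    have key' : ‖((2 : ℝ) ^ (n + 1))⁻¹ • f ((2 : ℝ) ^ (n + 1) • a) - ((2 : ℝ) ^ n)⁻¹ • f x‖
        ≤ 2⁻¹ * (((2 : ℝ) ^ n)⁻¹ * φ x x) := by
      rw [← mul_assoc, ← h4]; exact key
    linarith [key', ih, tri]
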